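/- Let A and B be symmetric n×n real matrices with A·1ₙ = k·1ₙ and B·1ₙ = k·1ₙ, and let C_A, C_B be n×n matrices with C_A·1ₙ = -l_A·1ₙ and C_B·1ₙ = -l_B·1ₙ. Let ω₁, ω₂ be nonzero reals with ω₁² + ω₂² = 1 satisfying l_A/l_B = ω₁²/ω₂² (equivalently ω₂²·l_A = ω₁²·l_B, with l_B ≠ 0). Then ψ = (ω₁·V_A, ω₂·V_B), with V_A = V_B = (1/√n)·1ₙ, is an eigenvector of R = [[A, C_A], [C_B, B]] with eigenvalue λ = k − (ω₂/ω₁)·l_A = k − (ω₁/ω₂)·l_B. -/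
import Mathlib


open Matrix Real

theorem stmt6 (n : ℕ) (hn : 0 < n) (k lA lB ω₁ ω₂ : ℝ)
    (A B CA CB : Matrix (Fin n) (Fin n) ℝ)
    (hA : A.IsSymm) (hB : B.IsSymm)
    (hAk : A.mulVec (fun _ => 1) = fun _ => k)
    (hBk : B.mulVec (fun _ => 1) = fun _ => k)
    (hCA : CA.mulVec (fun _ => 1) = fun _ => -lA)
    (hCB : CB.mulVec (fun _ => 1) = fun _ => -lB)
    (hω1 : ω₁ ≠ 0) (hω2 : ω₂ ≠ 0) (hnorm : ω₁ ^ 2 + ω₂ ^ 2 = 1)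
    (hlB : lB ≠ 0) (htune : ω₂ ^ 2 * lA = ω₁ ^ 2 * lB) :
    (Matrix.fromBlocks A CA CB B).mulVec
        (Sum.elim (fun _ : Fin n => ω₁ * (1 / Real.sqrt n))
                  (fun _ : Fin n => ω₂ * (1 / Real.sqrt n)))
      = (k - (ω₂ / ω₁) * lA) • (Sum.elim (fun _ : Fin n => ω₁ * (1 / Real.sqrt n))
                  (fun _ : Fin n => ω₂ * (1 / Real.sqrt n))) ∧
    k - (ω₂ / ω₁) * lA = k - (ω₁ / ω₂) * lB := by
  have heq : (ω₂ / ω₁) * lA = (ω₁ / ω₂) * lB := by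
    field_simp
    nlinarith [htune]
  have hMv : ∀ (M : Matrix (Fin n) (Fin n) ℝ) (c m : ℝ),
      M.mulVec (fun _ => 1) = (fun _ => m) →
      M.mulVec (fun _ : Fin n => c) = fun _ => c * m := by
    intro M c m hm
    have : (fun _ : Fin n => c) = c • (fun _ : Fin n => (1:ℝ)) := by
      funext i; simp
    rw [this, Matrix.mulVec_smul, hm]
    funext i; simp [mul_comm]
  refine ⟨?_, by rw [heq]⟩
  funext x
  set c := 1 / Real.sqrt n with hc
  cases x with
  | inl i =>
      have h1 := hMv A (ω₁ * c) k hAk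
      have h2 := hMv CA (ω₂ * c) (-lA) hCA
      simp only [Matrix.fromBlocks_mulVec, Sum.elim_inl, Pi.add_apply, Pi.smul_apply,
        smul_eq_mul]
      rw [show (Sum.elim (fun _ : Fin n => ω₁ * c) (fun _ : Fin n => ω₂ * c)) ∘ Sum.inl
          = fun _ : Fin n => ω₁ * c from rfl,
        show (Sum.elim (fun _ : Fin n => ω₁ * c) (fun _ : Fin n => ω₂ * c)) ∘ Sum.inr
          = fun _ : Fin n => ω₂ * c from rfl] at *
      rw [h1, h2]
      field_simp
      ring
  | inr i =>
      have h1 := hMv CB (ω₁ * c) (-lB) hCB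
      have h2 := hMv B (ω₂ * c) k hBk
      simp only [Matrix.fromBlocks_mulVec, Sum.elim_inr, Pi.add_apply, Pi.smul_apply,
        smul_eq_mul]
      rw [show (Sum.elim (fun _ : Fin n => ω₁ * c) (fun _ : Fin n => ω₂ * c)) ∘ Sum.inl
          = fun _ : Fin n => ω₁ * c from rfl,
        show (Sum.elim (fun _ : Fin n => ω₁ * c) (fun _ : Fin n => ω₂ * c)) ∘ Sum.inr
          = fun _ : Fin n => ω₂ * c from rfl] at *
      rw [h1, h2]
      have : (k - (ω₂ / ω₁) * lA) * (ω₂ * c) = (k - (ω₁ / ω₂) * lB) * (ω₂ * c) := by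
        rw [heq]
      rw [this]
      field_simp
      ring
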